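/- arXiv:1407.8315 — 3 statements merged into one kernel-verified Lean document; each statement's English description precedes it below -/
import Mathlib

section
/- Under the same balls-into-bins model (K items uniformly distributed, N/d bins of d cells each), for any integer f ≥ 1, the probability that at least f bins each receive more than a_m items is at most ((K/f) · (dK/N)^(a_m) · e^(a_m+2) / (a_m+1)^(a_m+1))^f. -/
open Finset Nat


lemma fact_ge_pow_div_exp (n : ℕ) : ((n : ℝ) / Real.exp 1) ^ n ≤ n ! := by
  induction n with
  | zero => simp
  | succ n ih =>
    have he : (0:ℝ) < Real.exp 1 := Real.exp_pos 1
    have key : ((n:ℝ) + 1) ^ n ≤ Real.exp 1 * (n:ℝ) ^ n := by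
      rcases Nat.eq_zero_or_pos n with h | h
      · simp [h]
      · have hn : (0:ℝ) < n := by exact_mod_cast h
        have h1 : (n:ℝ) + 1 = n * (1 + 1/n) := by field_simp
        have h2 : (1 + 1/(n:ℝ)) ≤ Real.exp (1/n) := by
          have := Real.add_one_le_exp (1/(n:ℝ)); linarith
        calc ((n:ℝ)+1)^n = (n:ℝ)^n * (1+1/(n:ℝ))^n := by rw [h1, mul_pow]
          _ ≤ (n:ℝ)^n * Real.exp (1/n) ^ n := by
              apply mul_le_mul_of_nonneg_left (pow_le_pow_left₀ (by positivity) h2 n) (by positivity)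
          _ = (n:ℝ)^n * Real.exp 1 := by
              rw [← Real.exp_nat_mul]
              congr 1
              field_simp
          _ = Real.exp 1 * (n:ℝ)^n := mul_comm _ _
    have step : (((n:ℝ)+1) / Real.exp 1) ^ (n+1) ≤ ((n:ℝ)+1) * ((n:ℝ)/Real.exp 1)^n := by
      have h3 : ((n:ℝ)+1)^(n+1) / Real.exp 1^(n+1) ≤ ((n:ℝ)+1)*(n:ℝ)^n / Real.exp 1^n := by
        rw [div_le_div_iff₀ (by positivity) (by positivity)]
        calc ((n:ℝ)+1)^(n+1) * Real.exp 1^n = ((n:ℝ)+1)^n*((n:ℝ)+1)*Real.exp 1^n := by ring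
          _ ≤ Real.exp 1*(n:ℝ)^n*((n:ℝ)+1)*Real.exp 1^n := by
              apply mul_le_mul_of_nonneg_right (mul_le_mul_of_nonneg_right key (by positivity)) (by positivity)
          _ = ((n:ℝ)+1)*(n:ℝ)^n*Real.exp 1^(n+1) := by ring
      calc (((n:ℝ)+1) / Real.exp 1) ^ (n+1) = ((n:ℝ)+1)^(n+1) / Real.exp 1^(n+1) := div_pow _ _ _
        _ ≤ ((n:ℝ)+1)*(n:ℝ)^n / Real.exp 1^n := h3
        _ = ((n:ℝ)+1) * ((n:ℝ)/Real.exp 1)^n := by rw [div_pow]; ring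
    calc ((↑(n+1) : ℝ) / Real.exp 1) ^ (n+1) = (((n:ℝ)+1) / Real.exp 1) ^ (n+1) := by push_cast; ring_nf
      _ ≤ ((n:ℝ)+1) * ((n:ℝ)/Real.exp 1)^n := step
      _ ≤ ((n:ℝ)+1) * n ! := mul_le_mul_of_nonneg_left ih (by positivity)
      _ = ((n+1)! : ℝ) := by push_cast [Nat.factorial_succ]; ring

lemma choose_le_epow (n k : ℕ) (hk : 1 ≤ k) :
    (n.choose k : ℝ) ≤ ((n : ℝ) * Real.exp 1 / k) ^ k := by
  have h1 : (n.choose k : ℝ) ≤ ((n : ℝ) ^ k) / (k ! : ℝ) := by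
    exact_mod_cast Nat.choose_le_pow_div k n (α := ℝ)
  have h2 : ((k : ℝ) / Real.exp 1) ^ k ≤ (k ! : ℝ) := fact_ge_pow_div_exp k
  have hkpos : (0:ℝ) < k := by exact_mod_cast hk
  have hfac : (0:ℝ) < (k ! : ℝ) := by exact_mod_cast (Nat.factorial_pos k)
  calc (n.choose k : ℝ) ≤ ((n:ℝ) ^ k) / (k ! : ℝ) := h1
    _ ≤ ((n:ℝ) ^ k) / (((k : ℝ) / Real.exp 1) ^ k) := by
        apply div_le_div_of_nonneg_left (by positivity) (by positivity) h2
    _ = ((n : ℝ) * Real.exp 1 / k) ^ k := by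
        rw [← div_pow]
        congr 1
        field_simp


lemma resClass_card_le (M d N : ℕ) (h : M * d = N) (hM : 0 < M) (b : ℕ) :
    ((Finset.univ : Finset (Fin N)).filter (fun x : Fin N => (x : ℕ) % M = b)).card ≤ d := by
  classical
  have := Finset.card_le_card_of_injOn
    (f := fun x : Fin N => (⟨(x : ℕ) / M, by
      rw [Nat.div_lt_iff_lt_mul hM, mul_comm, h]
      exact x.isLt⟩ : Fin d))
    (s := (Finset.univ : Finset (Fin N)).filter (fun x : Fin N => (x : ℕ) % M = b))
    (t := Finset.univ)
    (fun a _ => Finset.mem_univ _)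
    (by
      intro x hx y hy hxy
      simp only [Finset.mem_coe, Finset.mem_filter] at hx hy
      have hdiv : (x : ℕ) / M = (y : ℕ) / M := by
        simpa [Fin.ext_iff] using hxy
      have h1 := Nat.div_add_mod (x : ℕ) M
      have h2 := Nat.div_add_mod (y : ℕ) M
      rw [← hdiv] at h2
      have hbx : (x : ℕ) % M = b := hx.2
      have hby : (y : ℕ) % M = b := hy.2
      have : (x : ℕ) = (y : ℕ) := by omega
      exact Fin.ext this)
  simpa using this

lemma main_count (N M d K a f : ℕ) (h : M * d = N) (hM : 0 < M) :
    ((Finset.univ : Finset (Fin K → Fin N)).filter (fun ω =>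
        f ≤ (Finset.univ.filter (fun b : Fin M => a <
          (Finset.univ.filter (fun i : Fin K =>
            (ω i : ℕ) % M = (b : ℕ))).card)).card)).card
    ≤ M.choose f * ((K.choose (a+1))^f * (d^((a+1)*f) * N^(K - (a+1)*f))) := by
  classical
  -- bound for a fixed set S of f bins
  have key : ∀ S : Finset (Fin M), S.card = f →
      ((Finset.univ : Finset (Fin K → Fin N)).filter (fun ω => ∀ b ∈ S, a <
          (Finset.univ.filter (fun i : Fin K =>
            (ω i : ℕ) % M = (b : ℕ))).card)).card
      ≤ (K.choose (a+1))^f * (d^((a+1)*f) * N^(K - (a+1)*f)) := by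
    intro S hS
    set I : Finset (∀ b : Fin M, b ∈ (Finset.univ : Finset (Fin M)) → Finset (Fin K)) :=
      (Finset.univ : Finset (Fin M)).pi (fun b =>
        if b ∈ S then Finset.powersetCard (a+1) (Finset.univ : Finset (Fin K))
        else ({∅} : Finset (Finset (Fin K)))) with hI
    set F : (∀ b : Fin M, b ∈ (Finset.univ : Finset (Fin M)) → Finset (Fin K)) →
        Finset (Fin K → Fin N) :=
      fun T => Finset.univ.filter (fun ω : Fin K → Fin N =>
        ∀ b (hb : b ∈ S), ∀ i ∈ T b (Finset.mem_univ b), (ω i : ℕ) % M = (b : ℕ)) with hF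
    -- the event is covered by the union over families T
    have hsub : ((Finset.univ : Finset (Fin K → Fin N)).filter (fun ω => ∀ b ∈ S, a <
          (Finset.univ.filter (fun i : Fin K =>
            (ω i : ℕ) % M = (b : ℕ))).card)).card ≤ ∑ T ∈ I, (F T).card := by
      refine le_trans (Finset.card_le_card ?_) (Finset.card_biUnion_le)
      intro ω hω
      have hcond := (Finset.mem_filter.mp hω).2
      have hex : ∀ b ∈ S, ∃ t, t ⊆ (Finset.univ.filter (fun i : Fin K =>
          (ω i : ℕ) % M = (b : ℕ))) ∧ t.card = a + 1 := by
        intro b hb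
        obtain ⟨t, ht1, ht2⟩ := Finset.exists_subset_card_eq
          (s := Finset.univ.filter (fun i : Fin K => (ω i : ℕ) % M = (b : ℕ)))
          (n := a+1) (by have := hcond b hb; omega)
        exact ⟨t, ht1, ht2⟩
      refine Finset.mem_biUnion.mpr ⟨fun b _ => if hb : b ∈ S then (hex b hb).choose else ∅,
        ?_, ?_⟩
      · rw [Finset.mem_pi]
        intro b hb
        by_cases hbS : b ∈ S
        · rw [dif_pos hbS, if_pos hbS]
          exact Finset.mem_powersetCard.mpr ⟨Finset.subset_univ _, (hex b hbS).choose_spec.2⟩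
        · rw [dif_neg hbS, if_neg hbS]
          exact Finset.mem_singleton_self _
      · rw [hF]
        refine Finset.mem_filter.mpr ⟨Finset.mem_univ _, ?_⟩
        intro b hb i hi
        change i ∈ (if hb' : b ∈ S then (hex b hb').choose else ∅) at hi
        rw [dif_pos hb] at hi
        exact (Finset.mem_filter.mp ((hex b hb).choose_spec.1 hi)).2
    -- cardinality of the index set
    have hIcard : I.card = (K.choose (a+1))^f := by
      rw [hI, Finset.card_pi]
      have : ∀ b : Fin M, (if b ∈ S then Finset.powersetCard (a+1)
          (Finset.univ : Finset (Fin K)) else ({∅} : Finset (Finset (Fin K)))).card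
          = if b ∈ S then K.choose (a+1) else 1 := by
        intro b
        by_cases hbS : b ∈ S <;> simp [hbS, Finset.card_powersetCard]
      rw [Finset.prod_congr rfl (fun b _ => this b), Finset.prod_ite_mem,
        Finset.univ_inter, Finset.prod_const, hS]
    -- bound each (F T).card
    have hFT : ∀ T ∈ I, (F T).card ≤ d^((a+1)*f) * N^(K - (a+1)*f) := by
      intro T hT
      set g : Fin M → Finset (Fin K) := fun b => T b (Finset.mem_univ b) with hgdef
      have hg : ∀ b ∈ S, (g b).card = a + 1 := by
        intro b hb
        have := (Finset.mem_pi.mp hT) b (Finset.mem_univ b)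
        rw [if_pos hb] at this
        exact (Finset.mem_powersetCard.mp this).2
      by_cases hdisj : ∀ b ∈ S, ∀ b' ∈ S, b ≠ b' → Disjoint (g b) (g b')
      · set U := S.biUnion g with hU
        have hUcard : U.card = (a+1) * f := by
          rw [hU, Finset.card_biUnion hdisj, Finset.sum_congr rfl hg,
            Finset.sum_const, hS, smul_eq_mul, mul_comm]
        set β : Fin K → ℕ := fun i =>
          if hx : ∃ b, b ∈ S ∧ i ∈ g b then ((hx.choose : Fin M) : ℕ) else 0 with hβ
        set A : Fin K → Finset (Fin N) := fun i =>
          if i ∈ U then Finset.univ.filter (fun x : Fin N => (x : ℕ) % M = β i)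
          else Finset.univ with hA
        have hcard1 : (F T).card ≤ ((Finset.univ : Finset (Fin K)).pi A).card := by
          refine Finset.card_le_card_of_injOn (fun ω => (fun i _ => ω i)) ?_ ?_
          · intro ω hω
            rw [Finset.mem_coe, Finset.mem_pi]
            intro i _
            by_cases hiU : i ∈ U
            · have hex2 : ∃ b, b ∈ S ∧ i ∈ g b := by
                obtain ⟨b, hb1, hb2⟩ := Finset.mem_biUnion.mp hiU
                exact ⟨b, hb1, hb2⟩
              rw [hA]
              simp only [if_pos hiU, Finset.mem_filter, Finset.mem_univ, true_and]
              have hβi : β i = ((hex2.choose : Fin M) : ℕ) := by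
                simp only [hβ]
                rw [dif_pos hex2]
              rw [hβi]
              have hprop := (Finset.mem_filter.mp hω).2
              exact hprop hex2.choose hex2.choose_spec.1 i hex2.choose_spec.2
            · rw [hA]
              simp [if_neg hiU]
          · intro ω _ ω' _ heq
            funext i
            exact congrFun (congrFun heq i) (Finset.mem_univ i)
        have hcard2 : ((Finset.univ : Finset (Fin K)).pi A).card
            ≤ d^((a+1)*f) * N^(K - (a+1)*f) := by
          rw [Finset.card_pi]
          have hAle : ∀ i ∈ (Finset.univ : Finset (Fin K)), (A i).card ≤
              (if i ∈ U then d else N) := by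
            intro i _
            by_cases hiU : i ∈ U
            · rw [hA]; simp only [if_pos hiU]
              exact resClass_card_le M d N h hM _
            · rw [hA]; simp [if_neg hiU]
          calc ∏ i, (A i).card ≤ ∏ i, (if i ∈ U then d else N) :=
                Finset.prod_le_prod' hAle
            _ = d ^ U.card * N ^ (K - U.card) := by
                rw [Finset.prod_ite, Finset.prod_const, Finset.prod_const]
                have h1 : (Finset.univ.filter (fun i : Fin K => i ∈ U)) = U := by
                  ext i; simp
                have h2 : (Finset.univ.filter (fun i : Fin K => ¬ i ∈ U))
                    = Finset.univ \ U := by ext i; simp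
                rw [h1, h2, Finset.card_sdiff_of_subset (Finset.subset_univ U),
                  Finset.card_univ, Fintype.card_fin]
            _ = d^((a+1)*f) * N^(K - (a+1)*f) := by rw [hUcard]
        exact le_trans hcard1 hcard2
      · -- overlapping families give an empty event
        push_neg at hdisj
        obtain ⟨b, hb, b', hb', hne, hnd⟩ := hdisj
        obtain ⟨i, hib, hib'⟩ := Finset.not_disjoint_iff.mp hnd
        have hempty : F T = ∅ := by
          rw [Finset.eq_empty_iff_forall_notMem]
          intro ω hω
          have hprop := (Finset.mem_filter.mp hω).2
          have h1 := hprop b hb i hib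
          have h2 := hprop b' hb' i hib'
          exact hne (Fin.ext (h1.symm.trans h2))
        rw [hempty]
        simp
    calc ((Finset.univ : Finset (Fin K → Fin N)).filter (fun ω => ∀ b ∈ S, a <
          (Finset.univ.filter (fun i : Fin K =>
            (ω i : ℕ) % M = (b : ℕ))).card)).card
        ≤ ∑ T ∈ I, (F T).card := hsub
      _ ≤ I.card * (d^((a+1)*f) * N^(K - (a+1)*f)) := by
          have := Finset.sum_le_card_nsmul I (fun T => (F T).card) _ hFT
          simpa [smul_eq_mul] using this
      _ = (K.choose (a+1))^f * (d^((a+1)*f) * N^(K - (a+1)*f)) := by rw [hIcard]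
  -- union bound over the choice of S
  have hsubS : ((Finset.univ : Finset (Fin K → Fin N)).filter (fun ω =>
        f ≤ (Finset.univ.filter (fun b : Fin M => a <
          (Finset.univ.filter (fun i : Fin K =>
            (ω i : ℕ) % M = (b : ℕ))).card)).card)).card
      ≤ ∑ S ∈ Finset.powersetCard f (Finset.univ : Finset (Fin M)),
          ((Finset.univ : Finset (Fin K → Fin N)).filter (fun ω => ∀ b ∈ S, a <
          (Finset.univ.filter (fun i : Fin K =>
            (ω i : ℕ) % M = (b : ℕ))).card)).card := by
    refine le_trans (Finset.card_le_card ?_) (Finset.card_biUnion_le)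
    intro ω hω
    have hcond := (Finset.mem_filter.mp hω).2
    obtain ⟨B, hB1, hB2⟩ := Finset.exists_subset_card_eq hcond
    refine Finset.mem_biUnion.mpr ⟨B, ?_, ?_⟩
    · exact Finset.mem_powersetCard.mpr ⟨Finset.subset_univ _, hB2⟩
    · refine Finset.mem_filter.mpr ⟨Finset.mem_univ _, ?_⟩
      intro b hb
      exact (Finset.mem_filter.mp (hB1 hb)).2
  calc ((Finset.univ : Finset (Fin K → Fin N)).filter (fun ω =>
        f ≤ (Finset.univ.filter (fun b : Fin M => a <
          (Finset.univ.filter (fun i : Fin K =>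
            (ω i : ℕ) % M = (b : ℕ))).card)).card)).card
      ≤ ∑ S ∈ Finset.powersetCard f (Finset.univ : Finset (Fin M)),
          ((Finset.univ : Finset (Fin K → Fin N)).filter (fun ω => ∀ b ∈ S, a <
          (Finset.univ.filter (fun i : Fin K =>
            (ω i : ℕ) % M = (b : ℕ))).card)).card := hsubS
    _ ≤ (Finset.powersetCard f (Finset.univ : Finset (Fin M))).card *
          ((K.choose (a+1))^f * (d^((a+1)*f) * N^(K - (a+1)*f))) := by
        have := Finset.sum_le_card_nsmul (Finset.powersetCard f (Finset.univ : Finset (Fin M)))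
          _ _ (fun S hS => key S (Finset.mem_powersetCard.mp hS).2)
        simpa [smul_eq_mul] using this
    _ = M.choose f * ((K.choose (a+1))^f * (d^((a+1)*f) * N^(K - (a+1)*f))) := by
        rw [Finset.card_powersetCard]
        simp
/-- If `f` bins overflow then there are at least `(a+1)*f` items. -/
lemma overflow_needs (N M K a f : ℕ) (ω : Fin K → Fin N)
    (hω : f ≤ (Finset.univ.filter (fun b : Fin M => a <
      (Finset.univ.filter (fun i : Fin K => (ω i : ℕ) % M = (b : ℕ))).card)).card) :
    (a + 1) * f ≤ K := by
  classical
  obtain ⟨B, hB1, hB2⟩ := Finset.exists_subset_card_eq hω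
  have hdisj : ∀ b ∈ B, ∀ b' ∈ B, b ≠ b' →
      Disjoint (Finset.univ.filter (fun i : Fin K => (ω i : ℕ) % M = (b : ℕ)))
        (Finset.univ.filter (fun i : Fin K => (ω i : ℕ) % M = (b' : ℕ))) := by
    intro b _ b' _ hne
    rw [Finset.disjoint_left]
    intro i hi hi'
    have h1 := (Finset.mem_filter.mp hi).2
    have h2 := (Finset.mem_filter.mp hi').2
    exact hne (Fin.ext (h1.symm.trans h2))
  calc (a + 1) * f = ∑ _b ∈ B, (a + 1) := by
        rw [Finset.sum_const, hB2, smul_eq_mul, mul_comm]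
    _ ≤ ∑ b ∈ B, (Finset.univ.filter (fun i : Fin K =>
          (ω i : ℕ) % M = (b : ℕ))).card := by
        refine Finset.sum_le_sum ?_
        intro b hb
        have := (Finset.mem_filter.mp (hB1 hb)).2
        omega
    _ = (B.biUnion (fun b => Finset.univ.filter (fun i : Fin K =>
          (ω i : ℕ) % M = (b : ℕ)))).card := (Finset.card_biUnion hdisj).symm
    _ ≤ (Finset.univ : Finset (Fin K)).card := Finset.card_le_card (Finset.subset_univ _)
    _ = K := by simp

lemma numeric_bound (N d M K a f : ℕ) (hd : 1 ≤ d) (hN : 1 ≤ N) (hf : 1 ≤ f)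
    (hMd : M * d = N) (hm : (a + 1) * f ≤ K) :
    ((M.choose f * ((K.choose (a+1))^f * (d^((a+1)*f) * N^(K - (a+1)*f))) : ℕ) : ℝ)
      / (N : ℝ)^K
    ≤ (((K : ℝ) / f) * ((d : ℝ) * K / N) ^ a * Real.exp 1 ^ (a + 2)
        / ((a : ℝ) + 1) ^ (a + 1)) ^ f := by
  have hNpos : (0:ℝ) < N := by exact_mod_cast hN
  have hdpos : (0:ℝ) < d := by exact_mod_cast hd
  have hfpos : (0:ℝ) < f := by exact_mod_cast hf
  have hapos : (0:ℝ) < (a:ℝ) + 1 := by positivity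
  have he : (0:ℝ) < Real.exp 1 := Real.exp_pos 1
  have hMd' : (M:ℝ) * d = N := by exact_mod_cast hMd
  have hMr : (M:ℝ) = (N:ℝ) / d := eq_div_of_mul_eq hdpos.ne' hMd'
  set m := (a+1)*f with hmdef
  have hNK : (N:ℝ)^(K - m) * (N:ℝ)^m = (N:ℝ)^K := by
    rw [← pow_add, Nat.sub_add_cancel hm]
  have heq : ((M.choose f * ((K.choose (a+1))^f * (d^m * N^(K - m))) : ℕ) : ℝ) / (N : ℝ)^K
      = (M.choose f : ℝ) * ((K.choose (a+1) : ℝ)^f * ((d:ℝ)/(N:ℝ))^m) := by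
    push_cast
    rw [← hNK, div_pow]
    field_simp
  rw [heq]
  have hb1 : (M.choose f : ℝ) ≤ ((M:ℝ) * Real.exp 1 / f) ^ f := choose_le_epow M f hf
  have hb2 : ((K.choose (a+1) : ℝ))^f ≤ (((K:ℝ) * Real.exp 1 / ((a:ℕ)+1 : ℕ)) ^ (a+1))^f := by
    refine pow_le_pow_left₀ (by positivity) (choose_le_epow K (a+1) (by omega)) f
  have hchain : (M.choose f : ℝ) * ((K.choose (a+1) : ℝ)^f * ((d:ℝ)/(N:ℝ))^m)
      ≤ ((M:ℝ) * Real.exp 1 / f) ^ f *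
        ((((K:ℝ) * Real.exp 1 / ((a:ℕ)+1 : ℕ)) ^ (a+1))^f * ((d:ℝ)/(N:ℝ))^m) := by
    gcongr
  refine le_trans hchain (le_of_eq ?_)
  have hmexp : ((d:ℝ)/(N:ℝ))^m = (((d:ℝ)/(N:ℝ))^(a+1))^f := by
    rw [hmdef, pow_mul]
  rw [hmexp, ← mul_pow, ← mul_pow]
  congr 1
  push_cast
  rw [hMr]
  revert he
  generalize Real.exp 1 = E
  intro he
  rw [div_pow, div_pow, div_pow, mul_pow, mul_pow]
  field_simp
  ring

open Classical Finset in
/-- Balls-into-bins: K locations uniformly among N positions, N/d bins of d cells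
    each (bin `b` gets positions congruent to `b` mod `N/d`).  For any `f ≥ 1`,
    the probability that at least `f` bins each receive more than `a_m` items is
    at most `((K/f) · (dK/N)^(a_m) · e^(a_m+2) / (a_m+1)^(a_m+1))^f`. -/
theorem stmt_2 (N d K a_m f : ℕ) (hd : 1 ≤ d) (hN : 1 ≤ N) (hdvd : d ∣ N)
    (hf : 1 ≤ f) :
    ((Finset.univ.filter (fun ω : Fin K → Fin N =>
        f ≤ (Finset.univ.filter (fun b : Fin (N / d) => a_m <
          (Finset.univ.filter (fun i : Fin K =>
            (ω i : ℕ) % (N / d) = (b : ℕ))).card)).card)).card : ℝ)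
      / (Fintype.card (Fin K → Fin N)) ≤
    (((K : ℝ) / f) * ((d : ℝ) * K / N) ^ a_m * Real.exp 1 ^ (a_m + 2)
        / ((a_m : ℝ) + 1) ^ (a_m + 1)) ^ f := by
  have hMd : (N / d) * d = N := Nat.div_mul_cancel hdvd
  have hM : 0 < N / d := by
    rcases Nat.eq_zero_or_pos (N / d) with h0 | h
    · rw [h0, zero_mul] at hMd
      omega
    · exact h
  have hcardfun : (Fintype.card (Fin K → Fin N) : ℝ) = (N : ℝ) ^ K := by
    simp [Fintype.card_fun]
  by_cases hK : (a_m + 1) * f ≤ K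
  · have hcount := main_count N (N / d) d K a_m f hMd hM
    rw [hcardfun]
    refine le_trans ?_ (numeric_bound N d (N / d) K a_m f hd hN hf hMd hK)
    gcongr

  · have hempty : (Finset.univ.filter (fun ω : Fin K → Fin N =>
        f ≤ (Finset.univ.filter (fun b : Fin (N / d) => a_m <
          (Finset.univ.filter (fun i : Fin K =>
            (ω i : ℕ) % (N / d) = (b : ℕ))).card)).card)) = ∅ := by
      rw [Finset.eq_empty_iff_forall_notMem]
      intro ω hω
      exact hK (overflow_needs N (N / d) K a_m f ω (Finset.mem_filter.mp hω).2)
    rw [hempty]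
    simp only [Finset.card_empty, Nat.cast_zero, zero_div]
    positivity
end

section
/- Let z_0, ..., z_{a−1} ∈ ℂ be distinct and p_0, ..., p_{a−1} ∈ ℂ nonzero with syndromes m_l = Σ_j p_j z_j^l for 0 ≤ l ≤ 2a−1. Suppose (q_0,...,q_{b−1}, w_0,...,w_{b−1}) with b ≤ a, w_j distinct, q_j nonzero, also satisfies m_l = Σ_{j=0}^{b−1} q_j w_j^l for 0 ≤ l ≤ 2a−1. Then b = a and, after a permutation, (q_j, w_j) = (p_j, z_j) for all j. -/
lemma vander_aux {n : ℕ} (s : Fin n → ℂ) (hs : Function.Injective s)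
    (c : Fin n → ℂ) (h : ∀ l : Fin n, ∑ i, c i * s i ^ (l : ℕ) = 0) :
    ∀ i, c i = 0 := by
  have hdet : (Matrix.vandermonde s).det ≠ 0 := by
    rw [Matrix.det_vandermonde]
    refine Finset.prod_ne_zero_iff.2 fun i _ => Finset.prod_ne_zero_iff.2 fun j hj => ?_
    rw [Finset.mem_Ioi] at hj
    exact sub_ne_zero_of_ne fun he => (ne_of_gt hj) (hs he)
  have h0 : Matrix.vecMul c (Matrix.vandermonde s) = 0 := by
    funext l
    simpa [Matrix.vecMul, dotProduct, Matrix.vandermonde] using h l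
  have := Matrix.eq_zero_of_vecMul_eq_zero hdet h0
  exact fun i => congrFun this i

/-- Uniqueness of sparse exponential-sum representations from `2a` syndromes:
    if two representations with at most `a` distinct nodes and nonzero
    coefficients agree on the syndromes `m_0, ..., m_{2a-1}`, they coincide up
    to a permutation (in particular they have the same size). -/
theorem stmt_8 (a b : ℕ) (ha : 0 < a) (hb : b ≤ a)
    (z : Fin a → ℂ) (p : Fin a → ℂ)
    (hz : Function.Injective z) (hp : ∀ j, p j ≠ 0)
    (w : Fin b → ℂ) (q : Fin b → ℂ)
    (hw : Function.Injective w) (hq : ∀ j, q j ≠ 0)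
    (hsyn : ∀ l : ℕ, l ≤ 2 * a - 1 →
      (∑ j, p j * z j ^ l) = ∑ j, q j * w j ^ l) :
    b = a ∧ ∃ σ : Fin b ≃ Fin a, ∀ j : Fin b, q j = p (σ j) ∧ w j = z (σ j) := by
  classical
  set S : Finset ℂ := Finset.univ.image z ∪ Finset.univ.image w with hS
  have hzS : ∀ j, z j ∈ S := fun j =>
    Finset.mem_union_left _ (Finset.mem_image_of_mem _ (Finset.mem_univ j))
  have hwS : ∀ j, w j ∈ S := fun j =>
    Finset.mem_union_right _ (Finset.mem_image_of_mem _ (Finset.mem_univ j))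
  set P : ℂ → ℂ := fun x => ∑ j, if z j = x then p j else 0 with hPdef
  set Q : ℂ → ℂ := fun x => ∑ j, if w j = x then q j else 0 with hQdef
  have hPz : ∀ j, P (z j) = p j := by
    intro j; simp [hPdef, hz.eq_iff]
  have hQw : ∀ j, Q (w j) = q j := by
    intro j; simp [hQdef, hw.eq_iff]
  have hsumP : ∀ l : ℕ, ∑ x ∈ S, P x * x ^ l = ∑ j, p j * z j ^ l := by
    intro l
    simp only [hPdef, Finset.sum_mul, ite_mul, zero_mul]
    rw [Finset.sum_comm]
    refine Finset.sum_congr rfl fun j _ => ?_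
    rw [Finset.sum_eq_single (z j)]
    · simp
    · intro x _ hne; simp [Ne.symm hne]
    · intro h; exact absurd (hzS j) h
  have hsumQ : ∀ l : ℕ, ∑ x ∈ S, Q x * x ^ l = ∑ j, q j * w j ^ l := by
    intro l
    simp only [hQdef, Finset.sum_mul, ite_mul, zero_mul]
    rw [Finset.sum_comm]
    refine Finset.sum_congr rfl fun j _ => ?_
    rw [Finset.sum_eq_single (w j)]
    · simp
    · intro x _ hne; simp [Ne.symm hne]
    · intro h; exact absurd (hwS j) h
  have hcard : S.card ≤ 2 * a := by
    calc S.card ≤ (Finset.univ.image z).card + (Finset.univ.image w).card :=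
          Finset.card_union_le _ _
    _ ≤ a + b := by
        refine add_le_add ?_ ?_
        · simpa using Finset.card_image_le (s := (Finset.univ : Finset (Fin a))) (f := z)
        · simpa using Finset.card_image_le (s := (Finset.univ : Finset (Fin b))) (f := w)
    _ ≤ 2 * a := by omega
  -- enumerate S
  set n := S.card with hn
  have ecard : Fintype.card (Fin n) = Fintype.card {x // x ∈ S} := by
    simp [hn]
  let e : Fin n ≃ {x // x ∈ S} := Fintype.equivOfCardEq ecard
  set s : Fin n → ℂ := fun i => (e i : ℂ) with hsdef
  have hsinj : Function.Injective s := fun i j hij =>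
    e.injective (Subtype.ext hij)
  set c : Fin n → ℂ := fun i => P (s i) - Q (s i) with hcdef
  have hvan : ∀ l : Fin n, ∑ i, c i * s i ^ (l : ℕ) = 0 := by
    intro l
    have hl : (l : ℕ) ≤ 2 * a - 1 := by
      have := l.2
      omega
    have key : ∑ i, c i * s i ^ (l : ℕ)
        = ∑ x ∈ S, (P x - Q x) * x ^ (l : ℕ) := by
      rw [← Finset.sum_coe_sort S (fun x => (P x - Q x) * x ^ (l : ℕ))]
      exact (e.sum_comp (fun x => (P (x : ℂ) - Q (x : ℂ)) * (x : ℂ) ^ (l : ℕ)))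
    rw [key]
    simp only [sub_mul, Finset.sum_sub_distrib]
    rw [hsumP, hsumQ, hsyn _ hl, sub_self]
  have hPQ : ∀ x ∈ S, P x = Q x := by
    intro x hx
    have := vander_aux s hsinj c hvan (e.symm ⟨x, hx⟩)
    have hs : s (e.symm ⟨x, hx⟩) = x := by simp [hsdef]
    rw [hcdef] at this
    simp only [hs] at this
    exact sub_eq_zero.mp this
  -- each w i is some z j with matching coefficient
  have hwz : ∀ i : Fin b, ∃ j : Fin a, z j = w i ∧ p j = q i := by
    intro i
    have hPne : P (w i) ≠ 0 := by
      rw [hPQ _ (hwS i), hQw]; exact hq i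
    obtain ⟨j, _, hj⟩ := Finset.exists_ne_zero_of_sum_ne_zero hPne
    have hzj : z j = w i := by
      by_contra hne; simp [hne] at hj
    refine ⟨j, hzj, ?_⟩
    have := hPz j
    rw [hzj, hPQ _ (hwS i), hQw] at this
    exact this.symm
  have hzw : ∀ j : Fin a, ∃ i : Fin b, w i = z j := by
    intro j
    have hQne : Q (z j) ≠ 0 := by
      rw [← hPQ _ (hzS j), hPz]; exact hp j
    obtain ⟨i, _, hi⟩ := Finset.exists_ne_zero_of_sum_ne_zero hQne
    have : w i = z j := by
      by_contra hne; simp [hne] at hi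
    exact ⟨i, this⟩
  -- a ≤ b
  choose τ hτ using hzw
  have hτinj : Function.Injective τ := fun j₁ j₂ h => by
    apply hz; rw [← hτ j₁, ← hτ j₂, h]
  have hab : a ≤ b := by
    have := Fintype.card_le_of_injective τ hτinj
    simpa using this
  have hba : b = a := le_antisymm hb hab
  choose σ hσ1 hσ2 using hwz
  have hσinj : Function.Injective σ := fun i₁ i₂ h => by
    apply hw; rw [← hσ1 i₁, ← hσ1 i₂, h]
  have hσbij : Function.Bijective σ :=
    (Fintype.bijective_iff_injective_and_card σ).2 ⟨hσinj, by simp [hba]⟩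
  exact ⟨hba, Equiv.ofBijective σ hσbij, fun i => ⟨(hσ2 i).symm, (hσ1 i).symm⟩⟩
end

section
/- Suppose M = M_s + M_ns ∈ ℂ^{a_m × a_m}, where M_ns satisfies σ_1(M_ns) ≤ a_m d q_max, and M_s is either zero (case a = 0) or satisfies σ_1(M_s) ≥ a_m ε_min (case a = 1). If ε_min > 2 d q_max, then σ_1(M) > a_m d q_max in case a = 1, and σ_1(M) ≤ a_m d q_max in case a = 0; hence thresholding σ_1(M) at a_m d q_max distinguishes the two cases. -/
/-- The `j`-th largest singular value of a complex `n×n` matrix `A`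
    (`j = 0` gives the largest). -/
noncomputable def singVal {n : ℕ} (A : Matrix (Fin n) (Fin n) ℂ) (j : Fin n) : ℝ :=
  Real.sqrt ((Matrix.isHermitian_conjTranspose_mul_self A).eigenvalues
    (Tuple.sort (Matrix.isHermitian_conjTranspose_mul_self A).eigenvalues j.rev))

open Matrix in
lemma singVal_spec {n : ℕ} (hn : 0 < n) (A : Matrix (Fin n) (Fin n) ℂ) :
    (∃ v : EuclideanSpace ℂ (Fin n), ‖v‖ = 1 ∧
        ‖Matrix.toEuclideanLin A v‖ = singVal A ⟨0, hn⟩) ∧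
    (∀ v : EuclideanSpace ℂ (Fin n),
        ‖Matrix.toEuclideanLin A v‖ ≤ singVal A ⟨0, hn⟩ * ‖v‖) := by
  classical
  have hH : (Aᴴ * A).IsHermitian := Matrix.isHermitian_conjTranspose_mul_self A
  set f : Fin n → ℝ := hH.eigenvalues with hf
  set j0 : Fin n := Tuple.sort f ((⟨0, hn⟩ : Fin n).rev) with hj0
  have hs : singVal A ⟨0, hn⟩ = Real.sqrt (f j0) := rfl
  set B := hH.eigenvectorBasis with hB
  -- max property
  have hmax : ∀ i, f i ≤ f j0 := by
    intro i
    have h1 : (Tuple.sort f).symm i ≤ (⟨0, hn⟩ : Fin n).rev := by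
      rw [Fin.le_def, Fin.val_rev]
      have hlt := ((Tuple.sort f).symm i).isLt
      simp only [show ((⟨0, hn⟩ : Fin n) : ℕ) = 0 from rfl]
      omega
    have h2 := Tuple.monotone_sort f h1
    simpa using h2
  -- key Rayleigh identity
  have key : ∀ x : EuclideanSpace ℂ (Fin n),
      ‖Matrix.toEuclideanLin A x‖ ^ 2 = ∑ j, f j * ‖B.repr x j‖ ^ 2 := by
    intro x
    have h1 : inner (𝕜 := ℂ) (Matrix.toEuclideanLin A x) (Matrix.toEuclideanLin A x)
        = inner (𝕜 := ℂ) x (Matrix.toEuclideanLin (Aᴴ * A) x) := by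
      have hadj : Matrix.toEuclideanLin (Aᴴ * A) x
          = Matrix.toEuclideanLin Aᴴ (Matrix.toEuclideanLin A x) := by
        simp [Matrix.toEuclideanLin_apply, Matrix.mulVec_mulVec]
      rw [hadj, Matrix.toEuclideanLin_conjTranspose_eq_adjoint,
        LinearMap.adjoint_inner_right]
    have h2 : Matrix.toEuclideanLin (Aᴴ * A) x = ∑ j, ((f j : ℂ) * B.repr x j) • B j := by
      have hx : x = ∑ j, B.repr x j • B j := (B.sum_repr x).symm
      conv_lhs => rw [hx]
      rw [map_sum]
      refine Finset.sum_congr rfl fun j _ => ?_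
      rw [LinearMap.map_smul]
      have hTB : Matrix.toEuclideanLin (Aᴴ * A) (B j) = (f j : ℂ) • B j := by
        have := hH.mulVec_eigenvectorBasis j
        apply (WithLp.equiv 2 _).injective
        simp only [WithLp.equiv_apply, Matrix.ofLp_toEuclideanLin_apply]
        funext i
        have := congrFun this i
        simpa [WithLp.ofLp_smul] using this
      rw [hTB, smul_smul, mul_comm]
    rw [← @inner_self_eq_norm_sq ℂ, h1, h2, inner_sum, map_sum]
    refine Finset.sum_congr rfl fun j _ => ?_
    have hc : inner (𝕜 := ℂ) x (B j) = (starRingEnd ℂ) (B.repr x j) := by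
      rw [← inner_conj_symm, B.repr_apply_apply]
    rw [inner_smul_right, hc, mul_assoc, Complex.mul_conj']
    simp [← Complex.ofReal_pow, ← Complex.ofReal_mul]
  -- attainment
  have hrep : ∀ j, B.repr (B j0) j = if j = j0 then 1 else 0 := by
    intro j
    rw [B.repr_self]
    simp [EuclideanSpace.single_apply]
  have hatt : ‖Matrix.toEuclideanLin A (B j0)‖ ^ 2 = f j0 := by
    rw [key]
    rw [Finset.sum_eq_single j0]
    · simp [hrep]
    · intro j _ hj
      simp [hrep, hj]
    · simp
  have hμ : 0 ≤ f j0 := hatt ▸ sq_nonneg _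
  have hnorm1 : ‖(B j0 : EuclideanSpace ℂ (Fin n))‖ = 1 := B.orthonormal.1 j0
  constructor
  · refine ⟨B j0, hnorm1, ?_⟩
    rw [hs, ← hatt, Real.sqrt_sq (norm_nonneg _)]
  · intro v
    have hb : ‖Matrix.toEuclideanLin A v‖ ^ 2 ≤ f j0 * ‖v‖ ^ 2 := by
      rw [key]
      have hsum : ∑ j, f j * ‖B.repr v j‖ ^ 2 ≤ ∑ j, f j0 * ‖B.repr v j‖ ^ 2 :=
        Finset.sum_le_sum fun j _ =>
          mul_le_mul_of_nonneg_right (hmax j) (sq_nonneg _)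
      refine hsum.trans ?_
      rw [← Finset.mul_sum]
      have hv : ∑ j, ‖B.repr v j‖ ^ 2 = ‖v‖ ^ 2 := by
        have h1 : ‖B.repr v‖ = ‖v‖ := B.repr.norm_map v
        have h2 : ‖B.repr v‖ ^ 2 = ∑ i, ‖B.repr v i‖ ^ 2 := by
          rw [EuclideanSpace.norm_eq, Real.sq_sqrt (by positivity)]
        rw [← h1, h2]
      rw [hv]
    rw [hs]
    calc ‖Matrix.toEuclideanLin A v‖
        = Real.sqrt (‖Matrix.toEuclideanLin A v‖ ^ 2) := (Real.sqrt_sq (norm_nonneg _)).symm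
      _ ≤ Real.sqrt (f j0 * ‖v‖ ^ 2) := Real.sqrt_le_sqrt hb
      _ = Real.sqrt (f j0) * ‖v‖ := by
          rw [Real.sqrt_mul hμ, Real.sqrt_sq (norm_nonneg _)]

lemma singVal_nonneg {n : ℕ} (A : Matrix (Fin n) (Fin n) ℂ) (j : Fin n) :
    0 ≤ singVal A j := Real.sqrt_nonneg _

private noncomputable def sValAux {n : ℕ} (M : Matrix (Fin n) (Fin n) ℂ)
    (hM : M.IsHermitian) (j : Fin n) : ℝ :=
  Real.sqrt (hM.eigenvalues (Tuple.sort hM.eigenvalues j.rev))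

private lemma sValAux_congr {n : ℕ} {M M' : Matrix (Fin n) (Fin n) ℂ}
    (hM : M.IsHermitian) (hM' : M'.IsHermitian) (j : Fin n) (e : M = M') :
    sValAux M hM j = sValAux M' hM' j := by subst e; rfl

open Matrix in
lemma singVal_neg {n : ℕ} (A : Matrix (Fin n) (Fin n) ℂ) (j : Fin n) :
    singVal (-A) j = singVal A j := by
  show sValAux ((-A)ᴴ * (-A)) (Matrix.isHermitian_conjTranspose_mul_self (-A)) j
      = sValAux (Aᴴ * A) (Matrix.isHermitian_conjTranspose_mul_self A) j
  exact sValAux_congr _ _ j (by simp)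

lemma singVal_add_le {n : ℕ} (hn : 0 < n) (X Y : Matrix (Fin n) (Fin n) ℂ) :
    singVal (X + Y) ⟨0, hn⟩ ≤ singVal X ⟨0, hn⟩ + singVal Y ⟨0, hn⟩ := by
  obtain ⟨⟨v, hv1, hv2⟩, -⟩ := singVal_spec hn (X + Y)
  have hX := (singVal_spec hn X).2 v
  have hY := (singVal_spec hn Y).2 v
  rw [hv1, mul_one] at hX hY
  calc singVal (X + Y) ⟨0, hn⟩ = ‖Matrix.toEuclideanLin (X + Y) v‖ := hv2.symm
    _ = ‖Matrix.toEuclideanLin X v + Matrix.toEuclideanLin Y v‖ := by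
        rw [map_add]; rfl
    _ ≤ ‖Matrix.toEuclideanLin X v‖ + ‖Matrix.toEuclideanLin Y v‖ := norm_add_le _ _
    _ ≤ _ := add_le_add hX hY

/-- Correct determination of the number of collisions (Theorem 6): with
    `M = M_s + M_ns`, `σ_1(M_ns) ≤ a_m d q_max` and `ε_min > 2 d q_max`,
    thresholding `σ_1(M)` at `a_m d q_max` distinguishes the case `a = 0`
    (`M_s = 0`) from the case `a = 1` (`σ_1(M_s) ≥ a_m ε_min`). -/
theorem stmt_13 (a_m d : ℕ) (ha : 0 < a_m) (q_max ε_min : ℝ) (hq : 0 ≤ q_max)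
    (Ms Mns M : Matrix (Fin a_m) (Fin a_m) ℂ) (hM : M = Ms + Mns)
    (hns : singVal Mns ⟨0, ha⟩ ≤ a_m * d * q_max)
    (hε : 2 * d * q_max < ε_min) :
    (Ms = 0 → singVal M ⟨0, ha⟩ ≤ a_m * d * q_max) ∧
    ((a_m : ℝ) * ε_min ≤ singVal Ms ⟨0, ha⟩ →
      (a_m : ℝ) * d * q_max < singVal M ⟨0, ha⟩) := by
  constructor
  · intro h
    rw [hM, h, zero_add]
    exact hns
  · intro hMs
    have hMsM : Ms = M + (-Mns) := by rw [hM]; abel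
    have tri : singVal Ms ⟨0, ha⟩ ≤ singVal M ⟨0, ha⟩ + singVal Mns ⟨0, ha⟩ := by
      rw [hMsM]
      simpa [singVal_neg] using singVal_add_le ha M (-Mns)
    have hprod : 2 * ((a_m : ℝ) * d * q_max) < (a_m : ℝ) * ε_min := by
      have h0 : (0 : ℝ) < a_m := by exact_mod_cast ha
      nlinarith
    linarith
end
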